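/- (Theorem 2, part (i): essentially exponential convergence of S(ρ̂‖ρ).) Let d ≥ 1, and let ρ : [0,∞) → M_d(ℂ) and ρ̂ : [0,∞) → M_d(ℂ) be functions such that ρ(t) and ρ̂(t) are positive definite d×d density matrices for every t ≥ 0. Suppose there exist constants M > 0 and σ > 0 with ‖ρ̂(t) - ρ(t)‖ ≤ M·e^{-σt} in the Frobenius norm for all t ≥ 0, and a constant D > 0 with ‖ln ρ(t)‖ ≤ D for all t ≥ 0. Then there exist a finite time T > 0 and a constant K > 0 such that |S(ρ̂(t)‖ρ(t))| ≤ K·e^{-σ(1 - 1/e)t} for all t ≥ T. -/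

import Mathlib

open Matrix
open scoped ComplexOrder

/-- The Frobenius (Hilbert–Schmidt) norm of a complex matrix. -/
noncomputable def frobNorm {d : ℕ} (M : Matrix (Fin d) (Fin d) ℂ) : ℝ :=
  Real.sqrt ((Mᴴ * M).trace.re)

/-- The von Neumann entropy of a Hermitian matrix: `S(ρ) = ∑ₖ -λₖ ln λₖ` where the `λₖ`
are the real eigenvalues (counted with multiplicity), with the convention `0 ln 0 = 0`.
For non-Hermitian matrices the value is defined to be `0`. -/
noncomputable def vnEntropy {d : ℕ} (ρ : Matrix (Fin d) (Fin d) ℂ) : ℝ :=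
  if h : ρ.IsHermitian then ∑ k, Real.negMulLog (h.eigenvalues k) else 0

/-- The matrix logarithm obtained via the continuous functional calculus. -/
noncomputable def matLog {d : ℕ} (ρ : Matrix (Fin d) (Fin d) ℂ) : Matrix (Fin d) (Fin d) ℂ :=
  cfc Real.log ρ

/-- The quantum relative entropy `S(σ‖ρ) = Re tr (σ ln σ - σ ln ρ)`. -/
noncomputable def relEntropy {d : ℕ} (σ ρ : Matrix (Fin d) (Fin d) ℂ) : ℝ :=
  ((σ * matLog σ - σ * matLog ρ).trace).re

section Aux

lemma frob_sq {d : ℕ} (X : Matrix (Fin d) (Fin d) ℂ) :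
    ((Xᴴ * X).trace).re = ∑ p : Fin d × Fin d, ‖X p.1 p.2‖^2 := by
  rw [Fintype.sum_prod_type]
  simp only [Matrix.trace, Matrix.diag, Matrix.mul_apply, Matrix.conjTranspose_apply]
  rw [Complex.re_sum]
  rw [Finset.sum_comm]
  congr 1; ext j
  rw [Complex.re_sum]
  congr 1; ext i
  rw [Complex.star_def, ← Complex.normSq_eq_conj_mul_self, Complex.ofReal_re,
    Complex.normSq_eq_norm_sq]

lemma frobNorm_eq {d : ℕ} (X : Matrix (Fin d) (Fin d) ℂ) :
    frobNorm X = Real.sqrt (∑ p : Fin d × Fin d, ‖X p.1 p.2‖^2) := by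
  rw [frobNorm, frob_sq]

lemma frobNorm_nonneg {d : ℕ} (X : Matrix (Fin d) (Fin d) ℂ) : 0 ≤ frobNorm X :=
  Real.sqrt_nonneg _

lemma frobNorm_sq_eq {d : ℕ} (X : Matrix (Fin d) (Fin d) ℂ) :
    frobNorm X ^ 2 = ∑ p : Fin d × Fin d, ‖X p.1 p.2‖^2 := by
  rw [frobNorm_eq, Real.sq_sqrt]
  exact Finset.sum_nonneg fun p _ => sq_nonneg _

lemma trace_conj_re_eq {d : ℕ} (X Y : Matrix (Fin d) (Fin d) ℂ) :
    ((Xᴴ * Y).trace).re = ∑ p : Fin d × Fin d, ((starRingEnd ℂ) (X p.1 p.2) * Y p.1 p.2).re := by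
  rw [Fintype.sum_prod_type]
  simp only [Matrix.trace, Matrix.diag, Matrix.mul_apply, Matrix.conjTranspose_apply]
  rw [Complex.re_sum, Finset.sum_comm]
  congr 1; ext j
  rw [Complex.re_sum]
  rfl

lemma cs_sum {ι : Type*} [Fintype ι] (f g : ι → ℝ) (hf : ∀ p, 0 ≤ f p) (hg : ∀ p, 0 ≤ g p) :
    ∑ p, f p * g p ≤ Real.sqrt (∑ p, f p ^ 2) * Real.sqrt (∑ p, g p ^ 2) := by
  have h := Finset.sum_mul_sq_le_sq_mul_sq Finset.univ f g
  have h0 : (0:ℝ) ≤ ∑ p, f p * g p :=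
    Finset.sum_nonneg fun p _ => mul_nonneg (hf p) (hg p)
  calc ∑ p, f p * g p = Real.sqrt ((∑ p, f p * g p)^2) := (Real.sqrt_sq h0).symm
    _ ≤ Real.sqrt ((∑ p, f p ^ 2) * ∑ p, g p ^ 2) := Real.sqrt_le_sqrt h
    _ = _ := Real.sqrt_mul (Finset.sum_nonneg fun p _ => sq_nonneg _) _

lemma trace_re_abs_le {d : ℕ} (X Y : Matrix (Fin d) (Fin d) ℂ) :
    |((Xᴴ * Y).trace).re| ≤ frobNorm X * frobNorm Y := by
  rw [trace_conj_re_eq, frobNorm_eq, frobNorm_eq]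
  calc |∑ p : Fin d × Fin d, ((starRingEnd ℂ) (X p.1 p.2) * Y p.1 p.2).re|
      ≤ ∑ p : Fin d × Fin d, |((starRingEnd ℂ) (X p.1 p.2) * Y p.1 p.2).re| :=
        Finset.abs_sum_le_sum_abs _ _
    _ ≤ ∑ p : Fin d × Fin d, ‖X p.1 p.2‖ * ‖Y p.1 p.2‖ := by
        refine Finset.sum_le_sum fun p _ => ?_
        calc |((starRingEnd ℂ) (X p.1 p.2) * Y p.1 p.2).re|
            ≤ ‖(starRingEnd ℂ) (X p.1 p.2) * Y p.1 p.2‖ := Complex.abs_re_le_norm _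
          _ = ‖X p.1 p.2‖ * ‖Y p.1 p.2‖ := by
              rw [norm_mul, RingHomIsometric.norm_map]
    _ ≤ _ := cs_sum _ _ (fun p => norm_nonneg _) (fun p => norm_nonneg _)

lemma trace_DWDW {n : Type*} [Fintype n] [DecidableEq n] (v w : n → ℂ) (W : Matrix n n ℂ) :
    (Matrix.diagonal v * W * Matrix.diagonal w * Wᴴ).trace
      = ∑ j, ∑ k, v j * w k * ((‖W j k‖^2 : ℝ) : ℂ) := by
  have key : ∀ j k, (Matrix.diagonal v * W * Matrix.diagonal w) j k = v j * W j k * w k := by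
    intro j k
    rw [Matrix.mul_diagonal, Matrix.diagonal_mul]
  simp only [Matrix.trace, Matrix.diag, Matrix.mul_apply, key, Matrix.conjTranspose_apply]
  congr 1; ext j; congr 1; ext k
  rw [Complex.star_def]
  have : v j * W j k * w k * (starRingEnd ℂ) (W j k)
      = v j * w k * (W j k * (starRingEnd ℂ) (W j k)) := by ring
  rw [this, Complex.mul_conj]
  congr 1
  rw [Complex.normSq_eq_norm_sq]

lemma trace_unitary_conj {n : Type*} [Fintype n] [DecidableEq n]
    (U D : Matrix n n ℂ) (hU : star U * U = 1) :
    (U * D * star U).trace = D.trace := by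
  rw [Matrix.trace_mul_cycle, hU, Matrix.one_mul]

variable {d : ℕ} {A B : Matrix (Fin d) (Fin d) ℂ}

lemma cfc_herm (hA : A.IsHermitian) (f : ℝ → ℝ) : (hA.cfc f).IsHermitian := by
  rw [← hA.cfc_eq]
  exact cfc_predicate f A

lemma trace_cfc_mul_cfc_same (hA : A.IsHermitian) (f g : ℝ → ℝ) :
    ((hA.cfc f) * (hA.cfc g)).trace
      = ∑ k, ((f (hA.eigenvalues k) * g (hA.eigenvalues k) : ℝ) : ℂ) := by
  set U : Matrix (Fin d) (Fin d) ℂ := (hA.eigenvectorUnitary : Matrix (Fin d) (Fin d) ℂ)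
  have hU : star U * U = 1 := Unitary.star_mul_self_of_mem (hA.eigenvectorUnitary).2
  rw [Matrix.IsHermitian.cfc, Matrix.IsHermitian.cfc]
  simp only [Unitary.conjStarAlgAut_apply]
  have : (U * Matrix.diagonal (RCLike.ofReal ∘ f ∘ hA.eigenvalues) * star U)
      * (U * Matrix.diagonal (RCLike.ofReal ∘ g ∘ hA.eigenvalues) * star U)
      = U * (Matrix.diagonal (RCLike.ofReal ∘ f ∘ hA.eigenvalues)
          * Matrix.diagonal (RCLike.ofReal ∘ g ∘ hA.eigenvalues)) * star U := by
    have h1 : star U * (U * (Matrix.diagonal (RCLike.ofReal ∘ g ∘ hA.eigenvalues) * star U))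
        = Matrix.diagonal (RCLike.ofReal ∘ g ∘ hA.eigenvalues) * star U := by
      rw [← Matrix.mul_assoc, hU, Matrix.one_mul]
    simp only [Matrix.mul_assoc, h1]
  rw [this, trace_unitary_conj _ _ hU, Matrix.diagonal_mul_diagonal, Matrix.trace_diagonal]
  simp [RCLike.ofReal]

lemma cfc_id_eq (hA : A.IsHermitian) : hA.cfc id = A := by
  rw [Matrix.IsHermitian.cfc]
  conv_rhs => rw [hA.spectral_theorem]
  rfl

lemma trace_cfc (hA : A.IsHermitian) (f : ℝ → ℝ) :
    (hA.cfc f).trace = ∑ k, ((f (hA.eigenvalues k) : ℝ) : ℂ) := by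
  rw [Matrix.IsHermitian.cfc, Unitary.conjStarAlgAut_apply,
    trace_unitary_conj _ _ (Unitary.star_mul_self_of_mem (hA.eigenvectorUnitary).2),
    Matrix.trace_diagonal]
  simp [RCLike.ofReal]

lemma trace_cfc_mul_cfc (hA : A.IsHermitian) (hB : B.IsHermitian) (f g : ℝ → ℝ) :
    ((hA.cfc f) * (hB.cfc g)).trace
      = ∑ j, ∑ k, (f (hA.eigenvalues j) : ℂ) * (g (hB.eigenvalues k) : ℂ)
          * ((‖(star (hA.eigenvectorUnitary : Matrix (Fin d) (Fin d) ℂ)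
              * (hB.eigenvectorUnitary : Matrix (Fin d) (Fin d) ℂ)) j k‖^2 : ℝ) : ℂ) := by
  set U : Matrix (Fin d) (Fin d) ℂ := (hA.eigenvectorUnitary : Matrix (Fin d) (Fin d) ℂ) with hUdef
  set V : Matrix (Fin d) (Fin d) ℂ := (hB.eigenvectorUnitary : Matrix (Fin d) (Fin d) ℂ) with hVdef
  set Df := Matrix.diagonal (RCLike.ofReal ∘ f ∘ hA.eigenvalues : Fin d → ℂ) with hDf
  set Dg := Matrix.diagonal (RCLike.ofReal ∘ g ∘ hB.eigenvalues : Fin d → ℂ) with hDg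
  have e1 : (hA.cfc f) * (hB.cfc g) = U * (Df * (star U * (V * (Dg * star V)))) := by
    rw [Matrix.IsHermitian.cfc, Matrix.IsHermitian.cfc]
    simp only [Unitary.conjStarAlgAut_apply, Matrix.mul_assoc, hUdef, hVdef, hDf, hDg]
  have e2 : (Df * (star U * (V * (Dg * star V)))) * U
      = Df * (star U * V) * Dg * (star U * V)ᴴ := by
    simp only [← Matrix.star_eq_conjTranspose, StarMul.star_mul, star_star, Matrix.mul_assoc]
  rw [e1, Matrix.trace_mul_comm, e2, trace_DWDW]
  simp [RCLike.ofReal]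

lemma row_sum_sq {n : Type*} [Fintype n] [DecidableEq n] (W : Matrix n n ℂ)
    (h : W * star W = 1) (j : n) : ∑ k, ‖W j k‖^2 = 1 := by
  have := congrArg (fun M : Matrix n n ℂ => (M j j).re) h
  simp only [Matrix.mul_apply, Matrix.one_apply_eq, Complex.one_re] at this
  rw [← this, Complex.re_sum]
  congr 1; ext k
  rw [Matrix.star_apply, Complex.star_def, Complex.mul_conj, Complex.normSq_eq_norm_sq,
    Complex.ofReal_re]

lemma col_sum_sq {n : Type*} [Fintype n] [DecidableEq n] (W : Matrix n n ℂ)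
    (h : star W * W = 1) (k : n) : ∑ j, ‖W j k‖^2 = 1 := by
  have := congrArg (fun M : Matrix n n ℂ => (M k k).re) h
  simp only [Matrix.mul_apply, Matrix.one_apply_eq, Complex.one_re] at this
  rw [← this, Complex.re_sum]
  congr 1; ext j
  rw [Matrix.star_apply, Complex.star_def, mul_comm, Complex.mul_conj, Complex.normSq_eq_norm_sq,
    Complex.ofReal_re]

lemma matLog_eq (hA : A.IsHermitian) : matLog A = hA.cfc Real.log := hA.cfc_eq Real.log

lemma trace_eq_sum_eig (hA : A.IsHermitian) : A.trace = ∑ k, ((hA.eigenvalues k : ℝ) : ℂ) := by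
  have h1 : A.trace = (hA.cfc id).trace := by rw [cfc_id_eq]
  rw [h1, trace_cfc]
  simp

lemma trace_mul_log_self_re (hA : A.PosDef) :
    ((A * matLog A).trace).re = ∑ k, hA.1.eigenvalues k * Real.log (hA.1.eigenvalues k) := by
  have h0 : A * matLog A = (hA.1.cfc id) * (hA.1.cfc Real.log) := by
    rw [cfc_id_eq, matLog_eq hA.1]
  rw [h0, trace_cfc_mul_cfc_same, Complex.re_sum]
  simp

lemma trace_mul_log_re (hA : A.PosDef) (hB : B.PosDef) :
    ((A * matLog B).trace).re
      = ∑ j, ∑ k, hA.1.eigenvalues j * Real.log (hB.1.eigenvalues k) *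
          ‖(star (hA.1.eigenvectorUnitary : Matrix (Fin d) (Fin d) ℂ)
            * (hB.1.eigenvectorUnitary : Matrix (Fin d) (Fin d) ℂ)) j k‖^2 := by
  have h0 : A * matLog B = (hA.1.cfc id) * (hB.1.cfc Real.log) := by
    rw [cfc_id_eq, matLog_eq hB.1]
  rw [h0, trace_cfc_mul_cfc, Complex.re_sum]
  congr 1; ext j
  rw [Complex.re_sum]
  congr 1; ext k
  rw [← Complex.ofReal_mul, ← Complex.ofReal_mul, Complex.ofReal_re]
  rfl

lemma klein (hA : A.PosDef) (hB : B.PosDef) (hta : A.trace = 1) (htb : B.trace = 1) :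
    0 ≤ ((A * matLog A - A * matLog B).trace).re := by
  classical
  set lam := hA.1.eigenvalues with hlamdef
  set mu := hB.1.eigenvalues with hmudef
  set W := star (hA.1.eigenvectorUnitary : Matrix (Fin d) (Fin d) ℂ)
      * (hB.1.eigenvectorUnitary : Matrix (Fin d) (Fin d) ℂ) with hWdef
  have hWmem : W ∈ unitary (Matrix (Fin d) (Fin d) ℂ) :=
    mul_mem (Unitary.star_mem (hA.1.eigenvectorUnitary).2) (hB.1.eigenvectorUnitary).2
  have hrow : ∀ j, ∑ k, ‖W j k‖^2 = 1 := row_sum_sq W (Unitary.mul_star_self_of_mem hWmem)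
  have hcol : ∀ k, ∑ j, ‖W j k‖^2 = 1 := col_sum_sq W (Unitary.star_mul_self_of_mem hWmem)
  have hsumlam : ∑ j, lam j = 1 := by
    have h1 := trace_eq_sum_eig hA.1
    rw [hta] at h1
    have := congrArg Complex.re h1
    rw [Complex.one_re, Complex.re_sum] at this
    simpa using this.symm
  have hsummu : ∑ k, mu k = 1 := by
    have h1 := trace_eq_sum_eig hB.1
    rw [htb] at h1
    have := congrArg Complex.re h1
    rw [Complex.one_re, Complex.re_sum] at this
    simpa using this.symm
  rw [Matrix.trace_sub, Complex.sub_re, trace_mul_log_self_re hA, trace_mul_log_re hA hB]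
  rw [sub_nonneg]
  have e1 : ∑ k, lam k * Real.log (lam k)
      = ∑ j, ∑ k, lam j * Real.log (lam j) * ‖W j k‖^2 := by
    refine Finset.sum_congr rfl fun j _ => ?_
    rw [← Finset.mul_sum, hrow j, mul_one]
  rw [e1, ← sub_nonneg, ← Finset.sum_sub_distrib]
  simp_rw [← Finset.sum_sub_distrib]
  have key : ∀ j k, (lam j - mu k) * ‖W j k‖^2
      ≤ lam j * Real.log (lam j) * ‖W j k‖^2 - lam j * Real.log (mu k) * ‖W j k‖^2 := by
    intro j k
    have hlam : 0 < lam j := hA.eigenvalues_pos j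
    have hmu : 0 < mu k := hB.eigenvalues_pos k
    have h : Real.log (mu k) - Real.log (lam j) ≤ mu k / lam j - 1 := by
      have h0 := Real.log_le_sub_one_of_pos (div_pos hmu hlam)
      rwa [Real.log_div hmu.ne' hlam.ne'] at h0
    have h2 : lam j * (Real.log (mu k) - Real.log (lam j)) ≤ mu k - lam j := by
      have h1 := mul_le_mul_of_nonneg_left h hlam.le
      have h3 : lam j * (mu k / lam j) = mu k := by field_simp
      nlinarith [h1, h3]
    have hp : (0:ℝ) ≤ ‖W j k‖^2 := sq_nonneg _
    have h4 : lam j - mu k ≤ lam j * Real.log (lam j) - lam j * Real.log (mu k) := by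
      nlinarith [h2]
    nlinarith [mul_le_mul_of_nonneg_right h4 hp]
  have hge : ∑ j, ∑ k, (lam j - mu k) * ‖W j k‖^2
      ≤ ∑ j, ∑ k, (lam j * Real.log (lam j) * ‖W j k‖^2
          - lam j * Real.log (mu k) * ‖W j k‖^2) :=
    Finset.sum_le_sum fun j _ => Finset.sum_le_sum fun k _ => key j k
  refine le_trans (le_of_eq ?_) hge
  simp_rw [sub_mul, Finset.sum_sub_distrib]
  have e2 : ∑ j, ∑ k, lam j * ‖W j k‖^2 = 1 := by
    rw [show ∑ j, ∑ k, lam j * ‖W j k‖^2 = ∑ j, lam j * ∑ k, ‖W j k‖^2 by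
      exact Finset.sum_congr rfl fun j _ => (Finset.mul_sum _ _ _).symm]
    simp_rw [hrow]
    simpa using hsumlam
  have e3 : ∑ j, ∑ k, mu k * ‖W j k‖^2 = 1 := by
    rw [Finset.sum_comm]
    rw [show ∑ k, ∑ j, mu k * ‖W j k‖^2 = ∑ k, mu k * ∑ j, ‖W j k‖^2 by
      exact Finset.sum_congr rfl fun k _ => (Finset.mul_sum _ _ _).symm]
    simp_rw [hcol]
    simpa using hsummu
  rw [e2, e3, sub_self]

end Aux

section Aux2
variable {d : ℕ} {A B : Matrix (Fin d) (Fin d) ℂ}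

lemma frob_cfc (hA : A.IsHermitian) (f : ℝ → ℝ) :
    frobNorm (hA.cfc f) = Real.sqrt (∑ k, (f (hA.eigenvalues k))^2) := by
  rw [frobNorm, (cfc_herm hA f).eq, trace_cfc_mul_cfc_same, Complex.re_sum]
  congr 1
  refine Finset.sum_congr rfl fun k _ => ?_
  rw [Complex.ofReal_re, sq]

lemma frob_matLog (hA : A.PosDef) :
    frobNorm (matLog A) = Real.sqrt (∑ k, (Real.log (hA.1.eigenvalues k))^2) := by
  rw [matLog_eq hA.1, frob_cfc]

lemma relEntropy_nonneg (hA : A.PosDef) (hB : B.PosDef)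
    (hta : A.trace = 1) (htb : B.trace = 1) : 0 ≤ relEntropy A B :=
  klein hA hB hta htb

lemma relEntropy_abs_le (hA : A.PosDef) (hB : B.PosDef)
    (hta : A.trace = 1) (htb : B.trace = 1) :
    |relEntropy A B| ≤ frobNorm (A - B) * (frobNorm (matLog A) + frobNorm (matLog B)) := by
  have h0 := relEntropy_nonneg hA hB hta htb
  have h1 := relEntropy_nonneg hB hA htb hta
  rw [abs_of_nonneg h0]
  have hsum : relEntropy A B + relEntropy B A
      = (((A - B) * (matLog A - matLog B)).trace).re := by
    have e : (A - B) * (matLog A - matLog B)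
        = (A * matLog A - A * matLog B) + (B * matLog B - B * matLog A) := by
      noncomm_ring
    rw [e, Matrix.trace_add, Complex.add_re]
    rfl
  have hΔ : (A - B)ᴴ = A - B := (hA.1.sub hB.1).eq
  have hsplit : (((A - B) * (matLog A - matLog B)).trace).re
      = ((((A - B)ᴴ) * matLog A).trace).re - ((((A - B)ᴴ) * matLog B).trace).re := by
    rw [hΔ, Matrix.mul_sub, Matrix.trace_sub, Complex.sub_re]
  have c1 := trace_re_abs_le (A - B) (matLog A)
  have c2 := trace_re_abs_le (A - B) (matLog B)
  calc relEntropy A B ≤ relEntropy A B + relEntropy B A := le_add_of_nonneg_right h1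
    _ = ((((A - B)ᴴ) * matLog A).trace).re - ((((A - B)ᴴ) * matLog B).trace).re := by
        rw [hsum, hsplit]
    _ ≤ frobNorm (A - B) * frobNorm (matLog A) + frobNorm (A - B) * frobNorm (matLog B) := by
        have := abs_le.mp c1
        have := abs_le.mp c2
        cases abs_le.mp c1 with | intro l1 r1 =>
        cases abs_le.mp c2 with | intro l2 r2 =>
        linarith
    _ = _ := by ring

end Aux2

section Aux3
variable {d : ℕ} {A B : Matrix (Fin d) (Fin d) ℂ}

lemma eig_ge_exp_neg (hB : B.PosDef) {D : ℝ} (hD : 0 < D) (h : frobNorm (matLog B) ≤ D)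
    (k : Fin d) : Real.exp (-D) ≤ hB.1.eigenvalues k := by
  have hfrob := frob_matLog hB
  set S := ∑ j, (Real.log (hB.1.eigenvalues j))^2 with hS
  have hnn : 0 ≤ S := Finset.sum_nonneg fun j _ => sq_nonneg _
  have hsq : S ≤ D^2 := by
    have h1 : Real.sqrt S ≤ D := by rw [← hfrob]; exact h
    nlinarith [Real.sq_sqrt hnn, Real.sqrt_nonneg S]
  have hterm : (Real.log (hB.1.eigenvalues k))^2 ≤ D^2 := by
    refine le_trans ?_ hsq
    rw [hS]
    exact Finset.single_le_sum (f := fun j => (Real.log (hB.1.eigenvalues j))^2)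
      (fun j _ => sq_nonneg _) (Finset.mem_univ k)
  have hlogge : -D ≤ Real.log (hB.1.eigenvalues k) := by
    nlinarith [sq_nonneg (Real.log (hB.1.eigenvalues k) + D)]
  calc Real.exp (-D) ≤ Real.exp (Real.log (hB.1.eigenvalues k)) := Real.exp_le_exp.mpr hlogge
    _ = hB.1.eigenvalues k := Real.exp_log (hB.eigenvalues_pos k)

lemma cfc_sub_const (hB : B.IsHermitian) (c : ℝ) :
    hB.cfc (fun x => x - c) = B - (c:ℂ) • 1 := by
  set U : Matrix (Fin d) (Fin d) ℂ := (hB.eigenvectorUnitary : Matrix (Fin d) (Fin d) ℂ) with hU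
  have hdiag : Matrix.diagonal (RCLike.ofReal ∘ (fun x => x - c) ∘ hB.eigenvalues : Fin d → ℂ)
      = Matrix.diagonal (RCLike.ofReal ∘ hB.eigenvalues : Fin d → ℂ)
        - Matrix.diagonal (fun _ => (c:ℂ)) := by
    have hfun : (RCLike.ofReal ∘ (fun x => x - c) ∘ hB.eigenvalues : Fin d → ℂ)
        = fun i => (RCLike.ofReal ∘ hB.eigenvalues : Fin d → ℂ) i - (c:ℂ) := by
      funext i
      simp [RCLike.ofReal]
    rw [Matrix.diagonal_sub, hfun]
  rw [Matrix.IsHermitian.cfc, Unitary.conjStarAlgAut_apply, hdiag, Matrix.mul_sub, Matrix.sub_mul]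
  have h1 : U * Matrix.diagonal (fun _ : Fin d => (c:ℂ)) * star U = (c:ℂ) • 1 := by
    have : Matrix.diagonal (fun _ : Fin d => (c:ℂ)) = (c:ℂ) • (1 : Matrix (Fin d) (Fin d) ℂ) := by
      rw [Matrix.smul_one_eq_diagonal]
    rw [this, Matrix.mul_smul, Matrix.mul_one, Matrix.smul_mul,
      Unitary.mul_star_self_of_mem (hB.eigenvectorUnitary).2]
  rw [h1]
  congr 1
  conv_rhs => rw [hB.spectral_theorem]
  rfl

lemma posSemidef_cfc (hB : B.IsHermitian) (f : ℝ → ℝ) (h : ∀ k, 0 ≤ f (hB.eigenvalues k)) :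
    (hB.cfc f).PosSemidef := by
  rw [Matrix.IsHermitian.cfc, Unitary.conjStarAlgAut_apply, Matrix.star_eq_conjTranspose]
  refine (Matrix.posSemidef_diagonal_iff.mpr ?_).mul_mul_conjTranspose_same _
  intro i
  simpa using h i

lemma dot_self_re (x : Fin d → ℂ) : star x ⬝ᵥ x = ((∑ i, ‖x i‖^2 : ℝ) : ℂ) := by
  rw [dotProduct, Complex.ofReal_sum]
  refine Finset.sum_congr rfl fun i _ => ?_
  rw [Pi.star_apply, Complex.star_def, ← Complex.normSq_eq_conj_mul_self,
    Complex.normSq_eq_norm_sq]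

lemma mulVec_norm_sq_le (X : Matrix (Fin d) (Fin d) ℂ) (x : Fin d → ℂ) :
    ∑ i, ‖(X *ᵥ x) i‖^2 ≤ frobNorm X ^2 * ∑ j, ‖x j‖^2 := by
  have hrow : ∀ i, ‖(X *ᵥ x) i‖
      ≤ Real.sqrt (∑ j, ‖X i j‖^2) * Real.sqrt (∑ j, ‖x j‖^2) := by
    intro i
    calc ‖(X *ᵥ x) i‖ = ‖∑ j, X i j * x j‖ := rfl
      _ ≤ ∑ j, ‖X i j‖ * ‖x j‖ := by
          refine (norm_sum_le _ _).trans (le_of_eq ?_)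
          simp [norm_mul]
      _ ≤ _ := cs_sum _ _ (fun j => norm_nonneg _) (fun j => norm_nonneg _)
  calc ∑ i, ‖(X *ᵥ x) i‖^2 ≤ ∑ i, (∑ j, ‖X i j‖^2) * (∑ j, ‖x j‖^2) := by
        refine Finset.sum_le_sum fun i _ => ?_
        have h := pow_le_pow_left₀ (norm_nonneg _) (hrow i) 2
        rwa [mul_pow, Real.sq_sqrt (Finset.sum_nonneg fun j _ => sq_nonneg _),
          Real.sq_sqrt (Finset.sum_nonneg fun j _ => sq_nonneg _)] at h
    _ = (∑ i, ∑ j, ‖X i j‖^2) * (∑ j, ‖x j‖^2) := by rw [Finset.sum_mul]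
    _ = frobNorm X^2 * ∑ j, ‖x j‖^2 := by rw [frobNorm_sq_eq, Fintype.sum_prod_type]

lemma dot_mulVec_abs_le (X : Matrix (Fin d) (Fin d) ℂ) (x : Fin d → ℂ)
    (hx : ∑ i, ‖x i‖^2 = 1) : ‖star x ⬝ᵥ (X *ᵥ x)‖ ≤ frobNorm X := by
  have hyb := mulVec_norm_sq_le X x
  rw [hx, mul_one] at hyb
  calc ‖star x ⬝ᵥ (X *ᵥ x)‖ = ‖∑ i, (star x) i * (X *ᵥ x) i‖ := rfl
    _ ≤ ∑ i, ‖x i‖ * ‖(X *ᵥ x) i‖ := by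
        refine (norm_sum_le _ _).trans (le_of_eq ?_)
        refine Finset.sum_congr rfl fun i _ => ?_
        rw [norm_mul, Pi.star_apply, norm_star]
    _ ≤ Real.sqrt (∑ i, ‖x i‖^2) * Real.sqrt (∑ i, ‖(X *ᵥ x) i‖^2) :=
        cs_sum _ _ (fun i => norm_nonneg _) (fun i => norm_nonneg _)
    _ ≤ 1 * Real.sqrt (frobNorm X^2) := by
        rw [hx, Real.sqrt_one]
        gcongr
    _ = frobNorm X := by rw [one_mul, Real.sqrt_sq (frobNorm_nonneg X)]

lemma eig_lower (hA : A.PosDef) (hB : B.PosDef) (c : ℝ)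
    (hc : ∀ k, c ≤ hB.1.eigenvalues k) (k : Fin d) :
    c - frobNorm (A - B) ≤ hA.1.eigenvalues k := by
  set v : Fin d → ℂ := ⇑(hA.1.eigenvectorBasis k) with hv
  have hv1 : ∑ i, ‖v i‖^2 = 1 := by
    have hnorm : ‖hA.1.eigenvectorBasis k‖ = 1 := hA.1.eigenvectorBasis.orthonormal.1 k
    have heq := EuclideanSpace.norm_eq (hA.1.eigenvectorBasis k)
    rw [hnorm] at heq
    have h2 : ((1:ℝ))^2 = Real.sqrt (∑ i, ‖hA.1.eigenvectorBasis k i‖^2)^2 := by rw [← heq]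
    rw [Real.sq_sqrt (Finset.sum_nonneg fun i _ => sq_nonneg _), one_pow] at h2
    exact h2.symm
  have heig : hA.1.eigenvalues k = (star v ⬝ᵥ (A *ᵥ v)).re := by
    simpa using hA.1.eigenvalues_eq k
  have hdecomp : star v ⬝ᵥ (A *ᵥ v) = star v ⬝ᵥ (B *ᵥ v) + star v ⬝ᵥ ((A - B) *ᵥ v) := by
    have hBA : B + (A - B) = A := by abel
    rw [← dotProduct_add, ← Matrix.add_mulVec, hBA]
  have hBpart : c ≤ (star v ⬝ᵥ (B *ᵥ v)).re := by
    have hps : (B - (c:ℂ) • 1).PosSemidef := by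
      rw [← cfc_sub_const hB.1 c]
      refine posSemidef_cfc hB.1 _ (fun j => ?_)
      simpa using sub_nonneg.mpr (hc j)
    have h0 := hps.dotProduct_mulVec_nonneg v
    have hre : 0 ≤ (star v ⬝ᵥ ((B - (c:ℂ)•1) *ᵥ v)).re := by
      have := (Complex.le_def.mp h0).1
      simpa using this
    have hexpand : star v ⬝ᵥ ((B - (c:ℂ)•1) *ᵥ v)
        = star v ⬝ᵥ (B *ᵥ v) - (c:ℂ) * ((∑ i, ‖v i‖^2 : ℝ) : ℂ) := by
      rw [Matrix.sub_mulVec, dotProduct_sub]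
      congr 1
      rw [Matrix.smul_mulVec, Matrix.one_mulVec, dotProduct_smul, dot_self_re]
      rfl
    rw [hexpand, Complex.sub_re] at hre
    rw [hv1] at hre
    simp at hre
    linarith
  have hΔpart : -(frobNorm (A - B)) ≤ (star v ⬝ᵥ ((A - B) *ᵥ v)).re := by
    have h := dot_mulVec_abs_le (A - B) v hv1
    have h2 : |(star v ⬝ᵥ ((A - B) *ᵥ v)).re| ≤ ‖star v ⬝ᵥ ((A - B) *ᵥ v)‖ := by
      exact Complex.abs_re_le_norm _
    have := abs_le.mp (le_trans h2 h)
    linarith [this.1]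
  rw [heig, hdecomp, Complex.add_re]
  linarith

lemma eig_le_one (hA : A.PosDef) (hta : A.trace = 1) (k : Fin d) :
    hA.1.eigenvalues k ≤ 1 := by
  have hsum : ∑ j, hA.1.eigenvalues j = 1 := by
    have h1 := trace_eq_sum_eig hA.1
    rw [hta] at h1
    have := congrArg Complex.re h1
    rw [Complex.one_re, Complex.re_sum] at this
    simpa using this.symm
  rw [← hsum]
  exact Finset.single_le_sum (fun j _ => (hA.eigenvalues_pos j).le) (Finset.mem_univ k)

lemma frob_matLog_le (hA : A.PosDef) {m : ℝ} (hm : 0 < m) (hm1 : m ≤ 1)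
    (hge : ∀ k, m ≤ hA.1.eigenvalues k) (hle : ∀ k, hA.1.eigenvalues k ≤ 1) :
    frobNorm (matLog A) ≤ Real.sqrt d * (-Real.log m) := by
  rw [frob_matLog hA]
  have hterm : ∀ k, (Real.log (hA.1.eigenvalues k))^2 ≤ (Real.log m)^2 := by
    intro k
    have h1 : Real.log m ≤ Real.log (hA.1.eigenvalues k) :=
      Real.log_le_log hm (hge k)
    have h2 : Real.log (hA.1.eigenvalues k) ≤ 0 :=
      Real.log_nonpos (hA.eigenvalues_pos k).le (hle k)
    have h3 : Real.log m ≤ 0 := Real.log_nonpos hm.le hm1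
    nlinarith
  calc Real.sqrt (∑ k, (Real.log (hA.1.eigenvalues k))^2)
      ≤ Real.sqrt (∑ _k : Fin d, (Real.log m)^2) :=
        Real.sqrt_le_sqrt (Finset.sum_le_sum fun k _ => hterm k)
    _ = Real.sqrt (d * (Real.log m)^2) := by
        rw [Finset.sum_const, Finset.card_univ, Fintype.card_fin, nsmul_eq_mul]
    _ = Real.sqrt d * |Real.log m| := by
        rw [Real.sqrt_mul (Nat.cast_nonneg d), Real.sqrt_sq_eq_abs]
    _ = Real.sqrt d * (-Real.log m) := by
        rw [abs_of_nonpos (Real.log_nonpos hm.le hm1)]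

end Aux3

theorem stmt_9 (d : ℕ) (hd : 1 ≤ d)
    (ρ ρhat : ℝ → Matrix (Fin d) (Fin d) ℂ)
    (hρ : ∀ t : ℝ, 0 ≤ t → (ρ t).PosDef ∧ (ρ t).trace = 1)
    (hρhat : ∀ t : ℝ, 0 ≤ t → (ρhat t).PosDef ∧ (ρhat t).trace = 1)
    (M σ : ℝ) (hM : 0 < M) (hσ : 0 < σ)
    (hconv : ∀ t : ℝ, 0 ≤ t → frobNorm (ρhat t - ρ t) ≤ M * Real.exp (-(σ * t)))
    (D : ℝ) (hD : 0 < D) (hlog : ∀ t : ℝ, 0 ≤ t → frobNorm (matLog (ρ t)) ≤ D) :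
    ∃ T : ℝ, 0 < T ∧ ∃ K : ℝ, 0 < K ∧ ∀ t : ℝ, T ≤ t →
      |relEntropy (ρhat t) (ρ t)| ≤ K * Real.exp (-(σ * (1 - 1 / Real.exp 1) * t)) := by
  have hlog2 : (0:ℝ) ≤ Real.log 2 := Real.log_nonneg one_le_two
  refine ⟨max 1 ((D + Real.log (2*M)) / σ + 1), lt_of_lt_of_le one_pos (le_max_left _ _),
    M * (Real.sqrt d * (D + Real.log 2) + D), ?_, ?_⟩
  · have h1 : (0:ℝ) < Real.sqrt d * (D + Real.log 2) + D :=
      add_pos_of_nonneg_of_pos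
        (mul_nonneg (Real.sqrt_nonneg _) (by linarith)) hD
    exact mul_pos hM h1
  intro t ht
  have ht1 : (1:ℝ) ≤ t := le_trans (le_max_left _ _) ht
  have ht0 : (0:ℝ) ≤ t := by linarith
  obtain ⟨hAp, htA⟩ := hρhat t ht0
  obtain ⟨hBp, htB⟩ := hρ t ht0
  have hΔ := hconv t ht0
  have hΔnn : 0 ≤ frobNorm (ρhat t - ρ t) := frobNorm_nonneg _
  have hlogB := hlog t ht0
  have heigB : ∀ k, Real.exp (-D) ≤ hBp.1.eigenvalues k := eig_ge_exp_neg hBp hD hlogB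
  have h2M : (0:ℝ) < 2*M := by linarith
  have hst : D + Real.log (2*M) ≤ σ * t := by
    have h1 : (D + Real.log (2*M))/σ + 1 ≤ t := le_trans (le_max_right _ _) ht
    have h2 : (D + Real.log (2*M))/σ ≤ t := by linarith
    have := (div_le_iff₀ hσ).mp h2
    linarith [this]
  have hexp : Real.exp (-(σ*t)) ≤ Real.exp (-D) / (2*M) := by
    have h3 : Real.exp (-(σ*t)) ≤ Real.exp (-(D + Real.log (2*M))) :=
      Real.exp_le_exp.mpr (by linarith)
    refine le_trans h3 (le_of_eq ?_)
    rw [neg_add, Real.exp_add, Real.exp_neg (Real.log (2*M)), Real.exp_log h2M]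
    rw [div_eq_mul_inv]
  have hsmall : frobNorm (ρhat t - ρ t) ≤ Real.exp (-D)/2 := by
    refine le_trans hΔ ?_
    calc M * Real.exp (-(σ*t)) ≤ M * (Real.exp (-D)/(2*M)) :=
          mul_le_mul_of_nonneg_left hexp hM.le
      _ = Real.exp (-D)/2 := by field_simp
  have heigA : ∀ k, Real.exp (-D)/2 ≤ hAp.1.eigenvalues k := by
    intro k
    have := eig_lower hAp hBp (Real.exp (-D)) heigB k
    linarith
  set m := Real.exp (-D)/2 with hm
  have hmpos : 0 < m := by positivity
  have hm1 : m ≤ 1 := by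
    have : Real.exp (-D) ≤ 1 := Real.exp_le_one_iff.mpr (by linarith)
    rw [hm]; linarith
  have hlogm : -Real.log m = D + Real.log 2 := by
    rw [hm, Real.log_div (Real.exp_ne_zero _) two_ne_zero, Real.log_exp]
    ring
  have hfLA : frobNorm (matLog (ρhat t)) ≤ Real.sqrt d * (D + Real.log 2) := by
    have := frob_matLog_le hAp hmpos hm1 heigA (eig_le_one hAp htA)
    rwa [hlogm] at this
  have hfLB : frobNorm (matLog (ρ t)) ≤ D := hlogB
  have hmain : |relEntropy (ρhat t) (ρ t)|
      ≤ (M * Real.exp (-(σ * t))) * (Real.sqrt d * (D + Real.log 2) + D) := by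
    refine le_trans (relEntropy_abs_le hAp hBp htA htB) ?_
    refine mul_le_mul hΔ (add_le_add hfLA hfLB)
      (add_nonneg (frobNorm_nonneg _) (frobNorm_nonneg _))
      (by positivity)
  have hexp2 : Real.exp (-(σ * t)) ≤ Real.exp (-(σ * (1 - 1 / Real.exp 1) * t)) := by
    refine Real.exp_le_exp.mpr ?_
    have hinv : (0:ℝ) < 1 / Real.exp 1 := by positivity
    nlinarith [mul_nonneg hσ.le ht0]
  calc |relEntropy (ρhat t) (ρ t)|
      ≤ (M * Real.exp (-(σ * t))) * (Real.sqrt d * (D + Real.log 2) + D) := hmain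
    _ = (M * (Real.sqrt d * (D + Real.log 2) + D)) * Real.exp (-(σ * t)) := by ring
    _ ≤ (M * (Real.sqrt d * (D + Real.log 2) + D)) * Real.exp (-(σ * (1 - 1/Real.exp 1) * t)) := by
        refine mul_le_mul_of_nonneg_left hexp2 ?_
        positivity
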